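/- Let w : ℝ^{n+1} × (0,∞) → ℝ be smooth and caloric on an open set U ⊆ ℝ^{n+1} × (0,∞) with |∇w(x,t)| ≤ 1 on U, let ε > 0, and set g̃(x,t) = tanh(w(x,t)/√t). Then g̃ is a sub-solution of the ε-Allen–Cahn equation on {(x,t) ∈ U : w(x,t) > 4√t}, i.e. ∂ₜg̃ − Δg̃ + ε⁻² f(g̃) ≤ 0 there, and a super-solution on {(x,t) ∈ U : w(x,t) < −4√t}, i.e. ∂ₜg̃ − Δg̃ + ε⁻² f(g̃) ≥ 0 there, where f(u) = 2u(u²−1). -/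

import Mathlib

open MeasureTheory Set

noncomputable section

/-- `ℝ^{n+1}` as a Euclidean space. -/
abbrev Euc (n : ℕ) := EuclideanSpace ℝ (Fin (n + 1))

/-- The spatial Laplacian: sum of second derivatives in coordinate directions. -/
def lap (n : ℕ) (f : Euc n → ℝ) (x : Euc n) : ℝ :=
  ∑ i : Fin (n + 1),
    fderiv ℝ (fun y => fderiv ℝ f y (EuclideanSpace.single i 1)) x (EuclideanSpace.single i 1)

/-- The Allen–Cahn nonlinearity `f(u) = 2u(u²-1)`, the derivative of `F(u) = ½(1-u²)²`. -/
def acF (u : ℝ) : ℝ := 2 * u * (u ^ 2 - 1)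


lemma tanh_sq_lt_one (x : ℝ) : Real.tanh x ^ 2 < 1 := by
  rw [Real.tanh_eq_sinh_div_cosh, div_pow, div_lt_one (by positivity)]
  nlinarith [Real.cosh_sq_sub_sinh_sq x, Real.cosh_pos x]

lemma tanh_pos' {x : ℝ} (hx : 0 < x) : 0 < Real.tanh x := by
  rw [Real.tanh_eq_sinh_div_cosh]
  exact div_pos (by rwa [Real.sinh_pos_iff]) (Real.cosh_pos x)

lemma tanh_neg' {x : ℝ} (hx : x < 0) : Real.tanh x < 0 := by
  rw [Real.tanh_eq_sinh_div_cosh]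
  exact div_neg_of_neg_of_pos (by rwa [Real.sinh_neg_iff]) (Real.cosh_pos x)

lemma tanh_hasDerivAt (x : ℝ) : HasDerivAt Real.tanh (1 - Real.tanh x ^ 2) x := by
  have h := (Real.hasDerivAt_sinh x).div (Real.hasDerivAt_cosh x) (Real.cosh_pos x).ne'
  have he : (Real.sinh / Real.cosh) = Real.tanh :=
    funext fun y => (Real.tanh_eq_sinh_div_cosh y).symm
  rw [he] at h
  refine h.congr_deriv ?_
  have hc := (Real.cosh_pos x).ne'
  have hs := Real.cosh_sq_sub_sinh_sq x
  rw [Real.tanh_eq_sinh_div_cosh]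
  field_simp

lemma main_calc (n : ℕ) (w : Euc n × ℝ → ℝ) (U : Set (Euc n × ℝ))
    (hUopen : IsOpen U) (hUt : ∀ p ∈ U, 0 < p.2)
    (hsmooth : ContDiffOn ℝ ((⊤ : ℕ∞) : WithTop ℕ∞) w U)
    (hcaloric : ∀ p ∈ U, deriv (fun s => w (p.1, s)) p.2 = lap n (fun y => w (y, p.2)) p.1)
    (p : Euc n × ℝ) (hp : p ∈ U) :
    deriv (fun s => Real.tanh (w (p.1, s) / Real.sqrt s)) p.2
        - lap n (fun y => Real.tanh (w (y, p.2) / Real.sqrt p.2)) p.1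
      = (1 - Real.tanh (w p / Real.sqrt p.2) ^ 2) *
        (- (w p / Real.sqrt p.2) / (2 * p.2)
          + 2 * Real.tanh (w p / Real.sqrt p.2)
            * ‖gradient (fun y => w (y, p.2)) p.1‖ ^ 2 / p.2) := by
  obtain ⟨x, t⟩ := p
  simp only at *
  have ht : 0 < t := hUt (x, t) hp
  have hst : 0 < Real.sqrt t := Real.sqrt_pos.2 ht
  set u : Euc n → ℝ := fun y => w (y, t) with hu_def
  set V : Set (Euc n) := {y | (y, t) ∈ U} with hV_def
  have hVopen : IsOpen V := hUopen.preimage (continuous_id.prodMk continuous_const)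
  have hxV : x ∈ V := hp
  have hu : ∀ y ∈ V, ContDiffAt ℝ ((⊤ : ℕ∞) : WithTop ℕ∞) u y := fun y hy =>
    (hsmooth.contDiffAt (hUopen.mem_nhds hy)).comp y
      ((contDiff_id.prodMk contDiff_const).contDiffAt)
  set v : ℝ := w (x, t) / Real.sqrt t with hv_def
  set T : ℝ := Real.tanh v with hT_def
  -- time derivative
  have hτ : ContDiffAt ℝ ((⊤ : ℕ∞) : WithTop ℕ∞) (fun s => w (x, s)) t :=
    (hsmooth.contDiffAt (hUopen.mem_nhds hp)).comp t
      ((contDiff_const.prodMk contDiff_id).contDiffAt)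
  set A : ℝ := deriv (fun s => w (x, s)) t with hA_def
  have hA : HasDerivAt (fun s => w (x, s)) A t := (hτ.differentiableAt (by simp)).hasDerivAt
  have hsq : HasDerivAt Real.sqrt (1 / (2 * Real.sqrt t)) t := Real.hasDerivAt_sqrt ht.ne'
  have hdiv : HasDerivAt (fun s => w (x, s) / Real.sqrt s)
      ((A * Real.sqrt t - w (x, t) * (1 / (2 * Real.sqrt t))) / Real.sqrt t ^ 2) t :=
    hA.div hsq hst.ne'
  have htime : deriv (fun s => Real.tanh (w (x, s) / Real.sqrt s)) t
      = (1 - T ^ 2) * ((A * Real.sqrt t - w (x, t) * (1 / (2 * Real.sqrt t))) / Real.sqrt t ^ 2) :=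
    by have h := (tanh_hasDerivAt v).comp t hdiv; exact h.deriv
  -- spatial derivatives
  have hgderiv : ∀ y ∈ V, HasFDerivAt (fun z => Real.tanh (u z / Real.sqrt t))
      (((1 - Real.tanh (u y / Real.sqrt t) ^ 2) * (Real.sqrt t)⁻¹) • fderiv ℝ u y) y := by
    intro y hy
    have hdu := ((hu y hy).differentiableAt (by simp)).hasFDerivAt
    have hq : HasFDerivAt (fun z => u z / Real.sqrt t) ((Real.sqrt t)⁻¹ • fderiv ℝ u y) y := by
      have h := hdu.const_smul (Real.sqrt t)⁻¹
      exact h.congr_of_eventuallyEq (Filter.Eventually.of_forall fun z => div_eq_inv_mul _ _)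
    have h := (tanh_hasDerivAt (u y / Real.sqrt t)).comp_hasFDerivAt y hq
    rw [smul_smul] at h
    exact h
  -- second derivatives
  have hlap : ∀ i : Fin (n + 1),
      fderiv ℝ (fun y => fderiv ℝ (fun z => Real.tanh (u z / Real.sqrt t)) y
          (EuclideanSpace.single i 1)) x (EuclideanSpace.single i 1)
      = (1 - T ^ 2) * (Real.sqrt t)⁻¹
          * fderiv ℝ (fun y => fderiv ℝ u y (EuclideanSpace.single i 1)) x
              (EuclideanSpace.single i 1)
        + (-(2 * T * (1 - T ^ 2)) * (Real.sqrt t)⁻¹ * (Real.sqrt t)⁻¹)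
          * (fderiv ℝ u x (EuclideanSpace.single i 1)) ^ 2 := by
    intro i
    have heq : (fun y => fderiv ℝ (fun z => Real.tanh (u z / Real.sqrt t)) y
          (EuclideanSpace.single i 1))
        =ᶠ[nhds x] fun y => ((1 - Real.tanh (u y / Real.sqrt t) ^ 2) * (Real.sqrt t)⁻¹)
          * fderiv ℝ u y (EuclideanSpace.single i 1) := by
      filter_upwards [hVopen.mem_nhds hxV] with y hy
      rw [(hgderiv y hy).fderiv]
      simp [mul_comm]
    rw [heq.fderiv_eq]
    -- product rule
    have hdux := ((hu x hxV).differentiableAt (by simp)).hasFDerivAt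
    have hq : HasFDerivAt (fun z => u z / Real.sqrt t) ((Real.sqrt t)⁻¹ • fderiv ℝ u x) x := by
      have h := hdux.const_smul (Real.sqrt t)⁻¹
      exact h.congr_of_eventuallyEq (Filter.Eventually.of_forall fun z => div_eq_inv_mul _ _)
    have houter : HasDerivAt (fun r => (1 - Real.tanh r ^ 2) * (Real.sqrt t)⁻¹)
        ((-(2 * T * (1 - T ^ 2))) * (Real.sqrt t)⁻¹) v := by
      have h1 := ((tanh_hasDerivAt v).pow 2).const_sub 1
      have h2 := h1.mul_const (Real.sqrt t)⁻¹
      refine h2.congr_deriv ?_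
      rw [hT_def]; norm_num
    have ha : HasFDerivAt (fun y => (1 - Real.tanh (u y / Real.sqrt t) ^ 2) * (Real.sqrt t)⁻¹)
        (((-(2 * T * (1 - T ^ 2))) * (Real.sqrt t)⁻¹) • ((Real.sqrt t)⁻¹ • fderiv ℝ u x)) x :=
      by have h := houter.comp_hasFDerivAt x hq; exact h
    have hcd2 : ContDiffAt ℝ ((⊤ : ℕ∞) : WithTop ℕ∞) (fderiv ℝ u) x :=
      (hu x hxV).fderiv_right (by simp)
    have hb : DifferentiableAt ℝ (fun y => fderiv ℝ u y (EuclideanSpace.single i 1)) x :=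
      (hcd2.clm_apply contDiffAt_const).differentiableAt (by simp)
    have hprod := ha.mul hb.hasFDerivAt
    rw [(show HasFDerivAt (fun y => (1 - Real.tanh (u y / Real.sqrt t) ^ 2) * (Real.sqrt t)⁻¹
        * fderiv ℝ u y (EuclideanSpace.single i 1)) _ x from hprod).fderiv]
    simp only [ContinuousLinearMap.add_apply, ContinuousLinearMap.smul_apply, smul_eq_mul]
    have hux : Real.tanh (u x / Real.sqrt t) = T := rfl
    rw [hux]
    ring
  -- gradient components
  have hgrad_comp : ∑ i : Fin (n+1), (fderiv ℝ u x (EuclideanSpace.single i 1))^2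
      = ‖gradient u x‖^2 := by
    have h : ∀ i : Fin (n+1), fderiv ℝ u x (EuclideanSpace.single i 1) = gradient u x i := by
      intro i
      have h2 := InnerProductSpace.toDual_symm_apply (𝕜 := ℝ) (E := Euc n)
        (y := fderiv ℝ u x) (x := EuclideanSpace.single i 1)
      rw [EuclideanSpace.inner_single_right] at h2
      simpa [gradient] using h2.symm
    rw [← real_inner_self_eq_norm_sq]
    simp [PiLp.inner_apply, h, sq]
    rw [← sq, EuclideanSpace.norm_sq_eq]
    simp [sq]
  -- assemble laplacian
  have hlapg : lap n (fun y => Real.tanh (u y / Real.sqrt t)) x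
      = (1 - T ^ 2) * (Real.sqrt t)⁻¹ * lap n u x
        + (-(2 * T * (1 - T ^ 2)) * (Real.sqrt t)⁻¹ * (Real.sqrt t)⁻¹) * ‖gradient u x‖ ^ 2 := by
    unfold lap
    rw [Finset.sum_congr rfl (fun i _ => hlap i), Finset.sum_add_distrib,
      ← Finset.mul_sum, ← Finset.mul_sum, hgrad_comp]
  have hcal : A = lap n u x := hcaloric (x, t) hp
  have hlapeq : lap n (fun y => Real.tanh (w (y, t) / Real.sqrt t)) x
      = lap n (fun y => Real.tanh (u y / Real.sqrt t)) x := rfl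
  have hgradeq : gradient (fun y => w (y, t)) x = gradient u x := rfl
  rw [htime, hlapeq, hlapg, ← hcal, hgradeq, hv_def]
  have hs2 : Real.sqrt t ^ 2 = t := Real.sq_sqrt ht.le
  clear_value v T A u V
  clear hv_def hA_def hu_def hV_def htime hlapg hlapeq hcal hgrad_comp hlap hgderiv hdiv hsq hA hτ hu hxV hVopen hp hgradeq hcaloric hsmooth hUt hUopen
  generalize hsg : Real.sqrt t = s at hst hs2
  subst hs2
  field_simp
  ring


theorem stmt5 (n : ℕ) (w : Euc n × ℝ → ℝ) (U : Set (Euc n × ℝ))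
    (hUopen : IsOpen U) (hUt : ∀ p ∈ U, 0 < p.2)
    (hsmooth : ContDiffOn ℝ ((⊤ : ℕ∞) : WithTop ℕ∞) w U)
    (hcaloric : ∀ p ∈ U, deriv (fun s => w (p.1, s)) p.2 = lap n (fun y => w (y, p.2)) p.1)
    (hgrad : ∀ p ∈ U, ‖gradient (fun y => w (y, p.2)) p.1‖ ≤ 1)
    (ε : ℝ) (hε : 0 < ε) :
    (∀ p ∈ U, 4 * Real.sqrt p.2 < w p →
      deriv (fun s => Real.tanh (w (p.1, s) / Real.sqrt s)) p.2
          - lap n (fun y => Real.tanh (w (y, p.2) / Real.sqrt p.2)) p.1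
          + (ε ^ 2)⁻¹ * acF (Real.tanh (w p / Real.sqrt p.2)) ≤ 0) ∧
    (∀ p ∈ U, w p < -(4 * Real.sqrt p.2) →
      0 ≤ deriv (fun s => Real.tanh (w (p.1, s) / Real.sqrt s)) p.2
          - lap n (fun y => Real.tanh (w (y, p.2) / Real.sqrt p.2)) p.1
          + (ε ^ 2)⁻¹ * acF (Real.tanh (w p / Real.sqrt p.2))) := by
  constructor
  · intro p hp hw
    have ht : 0 < p.2 := hUt p hp
    have hst : 0 < Real.sqrt p.2 := Real.sqrt_pos.2 ht
    have hmc := main_calc n w U hUopen hUt hsmooth hcaloric p hp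
    rw [hmc]
    set T := Real.tanh (w p / Real.sqrt p.2) with hT
    set G := ‖gradient (fun y => w (y, p.2)) p.1‖ ^ 2 with hG_def
    have hv : 4 < w p / Real.sqrt p.2 := (lt_div_iff₀ hst).2 (by linarith)
    have hT1 : T ^ 2 < 1 := tanh_sq_lt_one _
    have hT0 : 0 < T := tanh_pos' (by linarith)
    have hG1 : G ≤ 1 := by
      have h := hgrad p hp
      have := norm_nonneg (gradient (fun y => w (y, p.2)) p.1)
      nlinarith
    have hG0 : 0 ≤ G := sq_nonneg _
    have hε2 : 0 < (ε ^ 2)⁻¹ := by positivity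
    have hb : -(w p / Real.sqrt p.2) / (2 * p.2) + 2 * T * G / p.2 - 2 * (ε ^ 2)⁻¹ * T ≤ 0 := by
      have h1 : -(w p / Real.sqrt p.2) / 2 + 2 * T * G - 2 * (ε ^ 2)⁻¹ * T * p.2 ≤ 0 := by
        nlinarith [mul_pos (mul_pos ht hε2) hT0]
      have h2 : -(w p / Real.sqrt p.2) / (2 * p.2) + 2 * T * G / p.2 - 2 * (ε ^ 2)⁻¹ * T
          = (-(w p / Real.sqrt p.2) / 2 + 2 * T * G - 2 * (ε ^ 2)⁻¹ * T * p.2) / p.2 := by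
        field_simp
      rw [h2]
      exact div_nonpos_of_nonpos_of_nonneg h1 ht.le
    have hfac : (1 - T ^ 2) * (-(w p / Real.sqrt p.2) / (2 * p.2) + 2 * T * G / p.2)
        + (ε ^ 2)⁻¹ * acF T
        = (1 - T ^ 2) * (-(w p / Real.sqrt p.2) / (2 * p.2) + 2 * T * G / p.2
            - 2 * (ε ^ 2)⁻¹ * T) := by
      rw [acF]; ring
    rw [hfac]
    exact mul_nonpos_of_nonneg_of_nonpos (by nlinarith) hb
  · intro p hp hw
    have ht : 0 < p.2 := hUt p hp
    have hst : 0 < Real.sqrt p.2 := Real.sqrt_pos.2 ht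
    have hmc := main_calc n w U hUopen hUt hsmooth hcaloric p hp
    rw [hmc]
    set T := Real.tanh (w p / Real.sqrt p.2) with hT
    set G := ‖gradient (fun y => w (y, p.2)) p.1‖ ^ 2 with hG_def
    have hv : w p / Real.sqrt p.2 < -4 := (div_lt_iff₀ hst).2 (by linarith)
    have hT1 : T ^ 2 < 1 := tanh_sq_lt_one _
    have hT0 : T < 0 := tanh_neg' (by linarith)
    have hG1 : G ≤ 1 := by
      have h := hgrad p hp
      have := norm_nonneg (gradient (fun y => w (y, p.2)) p.1)
      nlinarith
    have hG0 : 0 ≤ G := sq_nonneg _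
    have hε2 : 0 < (ε ^ 2)⁻¹ := by positivity
    have hb : 0 ≤ -(w p / Real.sqrt p.2) / (2 * p.2) + 2 * T * G / p.2 - 2 * (ε ^ 2)⁻¹ * T := by
      have h1 : 0 ≤ -(w p / Real.sqrt p.2) / 2 + 2 * T * G - 2 * (ε ^ 2)⁻¹ * T * p.2 := by
        nlinarith [mul_pos (mul_pos ht hε2) (neg_pos.2 hT0),
          mul_nonneg (neg_nonneg.2 hT0.le) (sub_nonneg.2 hG1)]
      have h2 : -(w p / Real.sqrt p.2) / (2 * p.2) + 2 * T * G / p.2 - 2 * (ε ^ 2)⁻¹ * T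
          = (-(w p / Real.sqrt p.2) / 2 + 2 * T * G - 2 * (ε ^ 2)⁻¹ * T * p.2) / p.2 := by
        field_simp
      rw [h2]
      exact div_nonneg h1 ht.le
    have hfac : (1 - T ^ 2) * (-(w p / Real.sqrt p.2) / (2 * p.2) + 2 * T * G / p.2)
        + (ε ^ 2)⁻¹ * acF T
        = (1 - T ^ 2) * (-(w p / Real.sqrt p.2) / (2 * p.2) + 2 * T * G / p.2
            - 2 * (ε ^ 2)⁻¹ * T) := by
      rw [acF]; ring
    rw [hfac]
    exact mul_nonneg (by nlinarith) hb

end
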